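/- arXiv:1712.00429 — 2 statements merged into one kernel-verified Lean document; each statement's English description precedes it below -/
import Mathlib

section
/- Let G be an undirected graph on N vertices with Laplacian L and neighbor sets 𝒩_i. For vectors x̂, e ∈ ℝ^N with x = x̂ - e, the quantity V̇ = -xᵀLx̂ satisfies V̇ ≤ Σ_{i=1}^N ( e_i² |𝒩_i| - Σ_{j∈𝒩_i} ¼ (x̂_i - x̂_j)² ). -/
open Matrix Finset

lemma swap_nbr_sum {N : ℕ} (G : SimpleGraph (Fin N)) [DecidableRel G.Adj]
    (f : Fin N → Fin N → ℝ) :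
    ∑ i, ∑ j ∈ G.neighborFinset i, f i j = ∑ i, ∑ j ∈ G.neighborFinset i, f j i := by
  simp only [SimpleGraph.neighborFinset_eq_filter, Finset.sum_filter]
  rw [Finset.sum_comm]
  apply Finset.sum_congr rfl; intro i _
  apply Finset.sum_congr rfl; intro j _
  exact if_congr (G.adj_comm j i) rfl rfl

lemma lap_mulVec {N : ℕ} (G : SimpleGraph (Fin N)) [DecidableRel G.Adj]
    (x : Fin N → ℝ) (i : Fin N) :
    ((G.lapMatrix ℝ) *ᵥ x) i = ∑ j ∈ G.neighborFinset i, (x i - x j) := by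
  simp only [SimpleGraph.lapMatrix, SimpleGraph.degMatrix, Matrix.mulVec,
    dotProduct, Matrix.sub_apply, Matrix.diagonal_apply, Matrix.of_apply,
    SimpleGraph.adjMatrix_apply, sub_mul, ite_mul, zero_mul, one_mul,
    Finset.sum_sub_distrib, Finset.sum_ite_eq, Finset.mem_univ, if_true,
    SimpleGraph.neighborFinset_eq_filter, Finset.sum_filter]
  congr 1
  rw [← Finset.sum_filter, Finset.sum_const, ← SimpleGraph.neighborFinset_eq_filter,
    SimpleGraph.card_neighborFinset_eq_degree, nsmul_eq_mul]

/-- Decentralized Lyapunov bound: for a connected undirected graph `G` with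
    Laplacian `L` and neighbor sets `𝒩ᵢ`, with `x = x̂ - e`, the quantity
    `V̇ = -xᵀ L x̂` satisfies
    `V̇ ≤ Σᵢ ( eᵢ² |𝒩ᵢ| - Σ_{j∈𝒩ᵢ} ¼ (x̂ᵢ - x̂ⱼ)² )`. -/
theorem decentralized_lyapunov_bound {N : ℕ}
    (G : SimpleGraph (Fin N)) [DecidableRel G.Adj] (hconn : G.Connected)
    (xhat e : Fin N → ℝ) :
    -((xhat - e) ⬝ᵥ ((G.lapMatrix ℝ) *ᵥ xhat)) ≤
      ∑ i, (e i ^ 2 * (G.degree i : ℝ) -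
        ∑ j ∈ G.neighborFinset i, (1 / 4) * (xhat i - xhat j) ^ 2) := by
  -- rewrite LHS as an explicit double sum
  have key : -((xhat - e) ⬝ᵥ ((G.lapMatrix ℝ) *ᵥ xhat)) =
      ∑ i, ∑ j ∈ G.neighborFinset i, (e i - xhat i) * (xhat i - xhat j) := by
    simp only [dotProduct, Pi.sub_apply, lap_mulVec, ← Finset.sum_neg_distrib,
      Finset.mul_sum]
    apply Finset.sum_congr rfl; intro i _
    apply Finset.sum_congr rfl; intro j _
    ring
  -- rewrite RHS as an explicit double sum
  have keyR : ∑ i, (e i ^ 2 * (G.degree i : ℝ) -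
        ∑ j ∈ G.neighborFinset i, (1 / 4) * (xhat i - xhat j) ^ 2) =
      ∑ i, ∑ j ∈ G.neighborFinset i, (e i ^ 2 - (1 / 4) * (xhat i - xhat j) ^ 2) := by
    apply Finset.sum_congr rfl; intro i _
    rw [Finset.sum_sub_distrib, Finset.sum_const,
      SimpleGraph.card_neighborFinset_eq_degree, nsmul_eq_mul, mul_comm]
  -- the quadratic form identity
  have S1eq : ∑ i, ∑ j ∈ G.neighborFinset i, xhat i * (xhat i - xhat j)
      = ∑ i, ∑ j ∈ G.neighborFinset i, (1 / 2) * (xhat i - xhat j) ^ 2 := by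
    have hs := swap_nbr_sum G (fun i j => xhat i * (xhat i - xhat j))
    have hadd : (∑ i, ∑ j ∈ G.neighborFinset i, xhat i * (xhat i - xhat j))
        + ∑ i, ∑ j ∈ G.neighborFinset i, xhat j * (xhat j - xhat i)
        = ∑ i, ∑ j ∈ G.neighborFinset i,
            (xhat i * (xhat i - xhat j) + xhat j * (xhat j - xhat i)) := by
      rw [← Finset.sum_add_distrib]
      apply Finset.sum_congr rfl; intro i _
      rw [← Finset.sum_add_distrib]
    have h2 : ∑ i, ∑ j ∈ G.neighborFinset i,
            (xhat i * (xhat i - xhat j) + xhat j * (xhat j - xhat i))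
        = ∑ i, ∑ j ∈ G.neighborFinset i, (2 : ℝ) * ((1 / 2) * (xhat i - xhat j) ^ 2) := by
      apply Finset.sum_congr rfl; intro i _
      apply Finset.sum_congr rfl; intro j _
      ring
    have h3 : ∑ i, ∑ j ∈ G.neighborFinset i,
          (2 : ℝ) * ((1 / 2) * (xhat i - xhat j) ^ 2)
        = 2 * ∑ i, ∑ j ∈ G.neighborFinset i, (1 / 2) * (xhat i - xhat j) ^ 2 := by
      rw [Finset.mul_sum]
      apply Finset.sum_congr rfl; intro i _
      rw [Finset.mul_sum]
    simp only [hs] at hadd ⊢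
    linarith [hadd, h2, h3]
  rw [key, keyR]
  -- split the LHS sum
  have split : ∑ i, ∑ j ∈ G.neighborFinset i, (e i - xhat i) * (xhat i - xhat j)
      = (∑ i, ∑ j ∈ G.neighborFinset i, e i * (xhat i - xhat j))
        - ∑ i, ∑ j ∈ G.neighborFinset i, xhat i * (xhat i - xhat j) := by
    rw [← Finset.sum_sub_distrib]
    apply Finset.sum_congr rfl; intro i _
    rw [← Finset.sum_sub_distrib]
    apply Finset.sum_congr rfl; intro j _
    ring
  rw [split, S1eq]
  have hbound : ∑ i, ∑ j ∈ G.neighborFinset i, e i * (xhat i - xhat j)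
      ≤ ∑ i, ∑ j ∈ G.neighborFinset i, (e i ^ 2 + (1 / 4) * (xhat i - xhat j) ^ 2) := by
    apply Finset.sum_le_sum; intro i _
    apply Finset.sum_le_sum; intro j _
    nlinarith [sq_nonneg (e i - (xhat i - xhat j) / 2)]
  have hfinal : ∑ i, ∑ j ∈ G.neighborFinset i, (e i ^ 2 + (1 / 4) * (xhat i - xhat j) ^ 2)
        - ∑ i, ∑ j ∈ G.neighborFinset i, (1 / 2) * (xhat i - xhat j) ^ 2
      = ∑ i, ∑ j ∈ G.neighborFinset i, (e i ^ 2 - (1 / 4) * (xhat i - xhat j) ^ 2) := by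
    rw [← Finset.sum_sub_distrib]
    apply Finset.sum_congr rfl; intro i _
    rw [← Finset.sum_sub_distrib]
    apply Finset.sum_congr rfl; intro j _
    ring
  linarith [hbound, hfinal]
end

section
/- In the setting of the previous bound, if for every i one has e_i² ≤ σ_i · (1/(4|𝒩_i|)) · Σ_{j∈𝒩_i} (x̂_i - x̂_j)² with σ_i ∈ (0,1), then V̇ ≤ Σ_{i=1}^N ((σ_i - 1)/4) Σ_{j∈𝒩_i}(x̂_i - x̂_j)², which is strictly negative whenever L x̂ ≠ 0. -/
open Matrix Finset

/-- If each agent's error satisfies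
    `eᵢ² ≤ σᵢ (1/(4|𝒩ᵢ|)) Σ_{j∈𝒩ᵢ} (x̂ᵢ - x̂ⱼ)²` with `σᵢ ∈ (0,1)`, then
    `V̇ = -(x̂-e)ᵀ L x̂ ≤ Σᵢ ((σᵢ-1)/4) Σ_{j∈𝒩ᵢ} (x̂ᵢ - x̂ⱼ)²`, which is
    strictly negative whenever `L x̂ ≠ 0`. -/
theorem decentralized_trigger_decrease {N : ℕ}
    (G : SimpleGraph (Fin N)) [DecidableRel G.Adj] (hconn : G.Connected)
    (hdeg : ∀ i, 0 < G.degree i)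
    (xhat e : Fin N → ℝ) (σ : Fin N → ℝ) (hσ : ∀ i, σ i ∈ Set.Ioo (0 : ℝ) 1)
    (herr : ∀ i, e i ^ 2 ≤
      σ i * (1 / (4 * (G.degree i : ℝ))) * ∑ j ∈ G.neighborFinset i, (xhat i - xhat j) ^ 2) :
    -((xhat - e) ⬝ᵥ ((G.lapMatrix ℝ) *ᵥ xhat)) ≤
      ∑ i, ((σ i - 1) / 4) * ∑ j ∈ G.neighborFinset i, (xhat i - xhat j) ^ 2 ∧
    ((G.lapMatrix ℝ) *ᵥ xhat ≠ 0 →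
      -((xhat - e) ⬝ᵥ ((G.lapMatrix ℝ) *ᵥ xhat)) < 0) := by
  set S : Fin N → ℝ := fun i => ∑ j ∈ G.neighborFinset i, (xhat i - xhat j) ^ 2 with hS
  have hSnonneg : ∀ i, 0 ≤ S i := fun i => Finset.sum_nonneg fun j _ => sq_nonneg _
  -- quadratic form identity
  have hquad : xhat ⬝ᵥ ((G.lapMatrix ℝ) *ᵥ xhat) = (∑ i, S i) / 2 := by
    rw [← Matrix.toLinearMap₂'_apply', SimpleGraph.lapMatrix_toLinearMap₂']
    congr 1
    refine Finset.sum_congr rfl fun i _ => ?_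
    simp only [hS, SimpleGraph.neighborFinset_eq_filter, Finset.sum_filter]
  -- Laplacian rows
  have hrow : ∀ i, ((G.lapMatrix ℝ) *ᵥ xhat) i
      = ∑ j ∈ G.neighborFinset i, (xhat i - xhat j) := by
    intro i
    rw [SimpleGraph.lapMatrix_mulVec_apply, Finset.sum_sub_distrib, Finset.sum_const,
      SimpleGraph.card_neighborFinset_eq_degree, nsmul_eq_mul]
  -- error term bound
  have hdot : e ⬝ᵥ ((G.lapMatrix ℝ) *ᵥ xhat) ≤ ∑ i, (σ i / 4 * S i + S i / 4) := by
    unfold dotProduct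
    refine Finset.sum_le_sum fun i _ => ?_
    rw [hrow i, Finset.mul_sum]
    have h1 : ∑ j ∈ G.neighborFinset i, e i * (xhat i - xhat j)
        ≤ ∑ j ∈ G.neighborFinset i, (e i ^ 2 + (xhat i - xhat j) ^ 2 / 4) := by
      refine Finset.sum_le_sum fun j _ => ?_
      nlinarith [sq_nonneg (e i - (xhat i - xhat j) / 2)]
    have h2 : ∑ j ∈ G.neighborFinset i, (e i ^ 2 + (xhat i - xhat j) ^ 2 / 4)
        = (G.degree i : ℝ) * e i ^ 2 + S i / 4 := by
      rw [Finset.sum_add_distrib, Finset.sum_const, SimpleGraph.card_neighborFinset_eq_degree,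
        nsmul_eq_mul, hS, ← Finset.sum_div]
    have hd : (0 : ℝ) < (G.degree i : ℝ) := by exact_mod_cast hdeg i
    have h3 : (G.degree i : ℝ) * e i ^ 2 ≤ σ i / 4 * S i := by
      have := herr i
      rw [hS]
      calc (G.degree i : ℝ) * e i ^ 2 ≤ (G.degree i : ℝ) * (σ i * (1 / (4 * (G.degree i : ℝ))) * S i) := by
            exact mul_le_mul_of_nonneg_left (herr i) hd.le
        _ = σ i / 4 * S i := by field_simp
    linarith
  have main : -((xhat - e) ⬝ᵥ ((G.lapMatrix ℝ) *ᵥ xhat)) ≤ ∑ i, ((σ i - 1) / 4) * S i := by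
    rw [sub_dotProduct]
    have hsplit : ∑ i, ((σ i - 1) / 4) * S i
        = (∑ i, (σ i / 4 * S i + S i / 4)) - (∑ i, S i) / 2 := by
      rw [Finset.sum_div, ← Finset.sum_sub_distrib]
      exact Finset.sum_congr rfl fun i _ => by ring
    rw [hquad, hsplit]
    linarith [hdot]
  refine ⟨main, fun hne => ?_⟩
  obtain ⟨i, hi⟩ := Function.ne_iff.mp hne
  have hSi : 0 < S i := by
    rcases lt_or_eq_of_le (hSnonneg i) with h | h
    · exact h
    · exfalso
      apply hi
      rw [hrow i, Pi.zero_apply]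
      refine Finset.sum_eq_zero fun j hj => ?_
      have : (xhat i - xhat j) ^ 2 = 0 := by
        have := (Finset.sum_eq_zero_iff_of_nonneg (fun j _ => sq_nonneg (xhat i - xhat j))).mp
          h.symm j hj
        exact this
      exact pow_eq_zero_iff (n := 2) (by norm_num) |>.mp this
  have hsum : ∑ i, ((σ i - 1) / 4) * S i < 0 := by
    have := Finset.sum_lt_sum (f := fun i => ((σ i - 1) / 4) * S i) (g := fun _ => (0 : ℝ))
      (fun k _ => mul_nonpos_of_nonpos_of_nonneg (by linarith [(hσ k).2]) (hSnonneg k))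
      ⟨i, Finset.mem_univ i, by
        have h1 : (σ i - 1) / 4 < 0 := by linarith [(hσ i).2]
        exact mul_neg_of_neg_of_pos h1 hSi⟩
    simpa using this
  exact lt_of_le_of_lt main hsum
end
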